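/- In ℝ² with ξ = (ξ₁, ξ₂), the following identity of meromorphic functions holds: 1/((1-e^{ξ₁})(1-e^{ξ₁+ξ₂})) has homogeneous degree-0 part of its Laurent expansion at 0 equal to 1/4 + (1/12)(ξ₁+ξ₂)/ξ₁ + (1/12) ξ₁/(ξ₁+ξ₂), and this also equals 3/8 + (1/12) ξ₂/ξ₁ + (1/24)(ξ₁-ξ₂)/(ξ₁+ξ₂). -/

import Mathlib

open Finset

noncomputable def bb : ℕ → ℂ
  | 0 => 1
  | n + 1 => -∑ j ∈ (Finset.range (n + 1)).attach,
      bb j.1 * (1 / ((Nat.factorial (n + 2 - j.1) : ℂ)))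
  decreasing_by exact Finset.mem_range.mp j.2

theorem bb_zero : bb 0 = 1 := by rw [bb]

theorem bb_succ (n : ℕ) : bb (n + 1) =
    -∑ j ∈ Finset.range (n + 1), bb j * (1 / ((Nat.factorial (n + 2 - j) : ℂ))) := by
  rw [bb, neg_inj]
  exact Finset.sum_attach _ (fun j => bb j * (1 / ((Nat.factorial (n + 2 - j) : ℂ))))

theorem bb_one : bb 1 = -(1/2) := by
  rw [show bb 1 = bb (0 + 1) from rfl, bb_succ, Finset.sum_range_one, bb_zero]
  norm_num [Nat.factorial]

theorem bb_two : bb 2 = 1/12 := by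
  rw [show (2:ℕ) = 1 + 1 from rfl, bb_succ]
  rw [Finset.sum_range_succ, Finset.sum_range_one, bb_zero, bb_one]
  norm_num [Nat.factorial]

theorem bb_bound : ∀ n, ‖bb n‖ ≤ 2 ^ n := by
  intro n
  induction n using Nat.strong_induction_on with
  | _ n ih =>
    match n with
    | 0 => simp [bb_zero]
    | n + 1 =>
      rw [bb_succ, norm_neg]
      calc ‖∑ j ∈ Finset.range (n + 1), bb j * (1 / ((Nat.factorial (n + 2 - j) : ℂ)))‖
          ≤ ∑ j ∈ Finset.range (n + 1), ‖bb j * (1 / ((Nat.factorial (n + 2 - j) : ℂ)))‖ :=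
            norm_sum_le _ _
        _ ≤ ∑ j ∈ Finset.range (n + 1), (2:ℝ) ^ j * (1/2) := by
            apply Finset.sum_le_sum
            intro j hj
            rw [norm_mul]
            have hj' := Finset.mem_range.mp hj
            have h2 : (2:ℕ) ≤ (n + 2 - j).factorial := by
              calc (2:ℕ) ≤ n + 2 - j := by omega
                _ ≤ (n + 2 - j).factorial := Nat.self_le_factorial _
            have : ‖(1 / ((Nat.factorial (n + 2 - j) : ℂ)))‖ ≤ 1/2 := by
              rw [norm_div, norm_one, Complex.norm_natCast]
              rw [div_le_div_iff₀ (by positivity) (by norm_num)]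
              have h2' : (2:ℝ) ≤ ((n + 2 - j).factorial : ℝ) := by exact_mod_cast h2
              nlinarith
            exact mul_le_mul (ih j (by omega)) this (norm_nonneg _) (by positivity)
        _ = (2 ^ (n+1) - 1) * (1/2) := by
            rw [← Finset.sum_mul, geom_sum_eq (by norm_num)]
            norm_num
        _ ≤ 2 ^ (n + 1) := by
            have : (0:ℝ) < 2 ^ (n+1) := by positivity
            nlinarith

theorem bb_conv (n : ℕ) :
    ∑ k ∈ Finset.range (n + 1), bb k * (1 / ((Nat.factorial (n - k + 1) : ℂ))) =
      if n = 0 then 1 else 0 := by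
  match n with
  | 0 => simp [bb_zero, Nat.factorial]
  | m + 1 =>
    rw [Finset.sum_range_succ]
    have h1 : m + 1 - (m + 1) + 1 = 1 := by omega
    have h2 : ∀ k ∈ Finset.range (m + 1),
        bb k * (1 / ((Nat.factorial (m + 1 - k + 1) : ℂ))) =
        bb k * (1 / ((Nat.factorial (m + 2 - k) : ℂ))) := by
      intro k hk
      have := Finset.mem_range.mp hk
      have : m + 1 - k + 1 = m + 2 - k := by omega
      rw [this]
    rw [Finset.sum_congr rfl h2, h1]
    simp [bb_succ, Nat.factorial]

theorem summable_bb (w : ℂ) (hw : ‖w‖ < 1/2) :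
    Summable (fun n => ‖bb n * w ^ n‖) := by
  have hg : Summable fun n : ℕ => (2 * ‖w‖) ^ n :=
    summable_geometric_of_lt_one (by positivity) (by linarith)
  apply Summable.of_nonneg_of_le (fun n => norm_nonneg _) (fun n => ?_) hg
  rw [norm_mul, norm_pow, mul_pow]
  exact mul_le_mul_of_nonneg_right (bb_bound n) (by positivity)

theorem summable_ee (w : ℂ) (hw : ‖w‖ < 1/2) :
    Summable (fun n => ‖(1 / ((Nat.factorial (n + 1) : ℂ))) * w ^ n‖) := by
  have hg : Summable fun n : ℕ => ‖w‖ ^ n :=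
    summable_geometric_of_lt_one (norm_nonneg w) (by linarith)
  apply Summable.of_nonneg_of_le (fun n => norm_nonneg _) (fun n => ?_) hg
  rw [norm_mul, norm_pow]
  have h1 : ‖(1 / ((Nat.factorial (n + 1) : ℂ)))‖ ≤ 1 := by
    rw [norm_div, norm_one, Complex.norm_natCast, div_le_one (by positivity)]
    exact_mod_cast Nat.one_le_iff_ne_zero.mpr (Nat.factorial_ne_zero _)
  exact mul_le_of_le_one_left (pow_nonneg (norm_nonneg w) n) h1

theorem ee_hasSum (w : ℂ) (hw : w ≠ 0) :
    HasSum (fun n => (1 / ((Nat.factorial (n + 1) : ℂ))) * w ^ n)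
      ((Complex.exp w - 1) / w) := by
  have h : HasSum (fun n => w ^ n / (Nat.factorial n : ℂ)) (Complex.exp w) := by
    rw [Complex.exp_eq_exp_ℂ]
    exact NormedSpace.expSeries_div_hasSum_exp w
  have h1 := (hasSum_nat_add_iff' 1).mpr h
  simp only [Finset.range_one, Finset.sum_singleton, pow_zero, Nat.factorial_zero,
    Nat.cast_one, div_one] at h1
  have h2 := h1.div_const w
  convert h2 using 2 with n
  · rfl
  rw [eq_div_iff hw, pow_succ]
  ring

theorem key_inv (w : ℂ) (hw : w ≠ 0) (hw2 : ‖w‖ < 1/2) :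
    (∑' n, bb n * w ^ n) * ((Complex.exp w - 1) / w) = 1 := by
  have hE := ee_hasSum w hw
  rw [← hE.tsum_eq,
    tsum_mul_tsum_eq_tsum_sum_range_of_summable_norm (summable_bb w hw2) (summable_ee w hw2)]
  have key : ∀ n : ℕ, ∑ k ∈ Finset.range (n + 1),
      (bb k * w ^ k) * ((1 / ((Nat.factorial (n - k + 1) : ℂ))) * w ^ (n - k)) =
      (if n = 0 then 1 else 0) * w ^ n := by
    intro n
    rw [← bb_conv n, Finset.sum_mul]
    apply Finset.sum_congr rfl
    intro k hk
    have hk' := Finset.mem_range.mp hk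
    have hpow : w ^ k * w ^ (n - k) = w ^ n := by rw [← pow_add]; congr 1; omega
    calc (bb k * w ^ k) * ((1 / ((Nat.factorial (n - k + 1) : ℂ))) * w ^ (n - k))
        = (bb k * (1 / ((Nat.factorial (n - k + 1) : ℂ)))) * (w ^ k * w ^ (n - k)) := by ring
      _ = bb k * (1 / ((Nat.factorial (n - k + 1) : ℂ))) * w ^ n := by rw [hpow]
  simp only [key]
  rw [tsum_eq_single 0 (fun n hn => by simp [hn])]
  simp

/-- The degree-0 homogeneous component of the Laurent expansion at `0` of
`S(ξ) = 1/((1-e^{ξ₁})(1-e^{ξ₁+ξ₂}))` (generating function of the cone spanned by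
`e₁` and `e₁+e₂`), expressed in two ways: it is the coefficient of `z²` in the
Taylor expansion of `z² S(zξ)`, and equals
`1/4 + (1/12)(ξ₁+ξ₂)/ξ₁ + (1/12)ξ₁/(ξ₁+ξ₂) = 3/8 + (1/12)ξ₂/ξ₁ + (1/24)(ξ₁-ξ₂)/(ξ₁+ξ₂)`. -/
theorem stmt13 (ξ₁ ξ₂ : ℂ) (h1 : ξ₁ ≠ 0) (h2 : ξ₁ + ξ₂ ≠ 0) :
    (∃ (a : ℕ → ℂ) (r : ℝ), 0 < r ∧
      a 2 = 1 / 4 + (1 / 12) * ((ξ₁ + ξ₂) / ξ₁) + (1 / 12) * (ξ₁ / (ξ₁ + ξ₂)) ∧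
      ∀ z : ℂ, ‖z‖ < r → z ≠ 0 →
        HasSum (fun m : ℕ => a m * z ^ m)
          (z ^ 2 *
            (1 / ((1 - Complex.exp (z * ξ₁)) * (1 - Complex.exp (z * (ξ₁ + ξ₂)))))))
      ∧
    1 / 4 + (1 / 12) * ((ξ₁ + ξ₂) / ξ₁) + (1 / 12) * (ξ₁ / (ξ₁ + ξ₂)) =
      3 / 8 + (1 / 12) * (ξ₂ / ξ₁) + (1 / 24) * ((ξ₁ - ξ₂) / (ξ₁ + ξ₂)) := by
  constructor
  · refine ⟨fun m => (1 / (ξ₁ * (ξ₁ + ξ₂))) * ∑ k ∈ Finset.range (m + 1),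
        (bb k * ξ₁ ^ k) * (bb (m - k) * (ξ₁ + ξ₂) ^ (m - k)),
      (4 * (‖ξ₁‖ + ‖ξ₁ + ξ₂‖ + 1))⁻¹, by positivity, ?_, ?_⟩
    · show (1 / (ξ₁ * (ξ₁ + ξ₂))) * ∑ k ∈ Finset.range 3,
        (bb k * ξ₁ ^ k) * (bb (2 - k) * (ξ₁ + ξ₂) ^ (2 - k)) = _
      rw [Finset.sum_range_succ, Finset.sum_range_succ, Finset.sum_range_one]
      norm_num [bb_zero, bb_one, bb_two]
      field_simp
      ring
    · intro z hz hz0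
      set D := ‖ξ₁‖ + ‖ξ₁ + ξ₂‖ + 1 with hD
      clear_value D
      have hD1 : (0:ℝ) < D := by rw [hD]; positivity
      have hzD : ‖z‖ * D < 1/4 := by
        have h4 : (4 * D)⁻¹ * D = 1/4 := by
          field_simp
        calc ‖z‖ * D < (4 * D)⁻¹ * D := mul_lt_mul_of_pos_right hz hD1
          _ = 1/4 := h4
      have hw1n : ‖z * ξ₁‖ < 1/2 := by
        rw [norm_mul]
        have : ‖z‖ * ‖ξ₁‖ ≤ ‖z‖ * D := by
          apply mul_le_mul_of_nonneg_left _ (norm_nonneg z)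
          rw [hD]; linarith [norm_nonneg (ξ₁ + ξ₂)]
        linarith
      have hw2n : ‖z * (ξ₁ + ξ₂)‖ < 1/2 := by
        rw [norm_mul]
        have : ‖z‖ * ‖ξ₁ + ξ₂‖ ≤ ‖z‖ * D := by
          apply mul_le_mul_of_nonneg_left _ (norm_nonneg z)
          rw [hD]; linarith [norm_nonneg ξ₁]
        linarith
      have hw1 : z * ξ₁ ≠ 0 := mul_ne_zero hz0 h1
      have hw2 : z * (ξ₁ + ξ₂) ≠ 0 := mul_ne_zero hz0 h2
      have hf := summable_bb _ hw1n
      have hg := summable_bb _ hw2n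
      have hsum : Summable (fun n => ∑ k ∈ Finset.range (n + 1),
          (bb k * (z * ξ₁) ^ k) * (bb (n - k) * (z * (ξ₁ + ξ₂)) ^ (n - k))) :=
        (summable_norm_sum_mul_range_of_summable_norm hf hg).of_norm
      have hprod : HasSum (fun n => ∑ k ∈ Finset.range (n + 1),
          (bb k * (z * ξ₁) ^ k) * (bb (n - k) * (z * (ξ₁ + ξ₂)) ^ (n - k)))
          ((∑' n, bb n * (z * ξ₁) ^ n) * (∑' n, bb n * (z * (ξ₁ + ξ₂)) ^ n)) := by
        rw [tsum_mul_tsum_eq_tsum_sum_range_of_summable_norm hf hg]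
        exact hsum.hasSum
      have hmul := hprod.mul_left (1 / (ξ₁ * (ξ₁ + ξ₂)))
      have k1 := key_inv (z * ξ₁) hw1 hw1n
      have k2 := key_inv (z * (ξ₁ + ξ₂)) hw2 hw2n
      have hA1 : Complex.exp (z * ξ₁) - 1 ≠ 0 := by
        intro h
        rw [h, zero_div, mul_zero] at k1
        exact one_ne_zero k1.symm
      have hA2 : Complex.exp (z * (ξ₁ + ξ₂)) - 1 ≠ 0 := by
        intro h
        rw [h, zero_div, mul_zero] at k2
        exact one_ne_zero k2.symm
      have hP1 : (∑' n, bb n * (z * ξ₁) ^ n) = (z * ξ₁) / (Complex.exp (z * ξ₁) - 1) := by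
        rw [eq_div_iff hA1]
        field_simp at k1
        linear_combination k1
      have hP2 : (∑' n, bb n * (z * (ξ₁ + ξ₂)) ^ n) =
          (z * (ξ₁ + ξ₂)) / (Complex.exp (z * (ξ₁ + ξ₂)) - 1) := by
        rw [eq_div_iff hA2]
        field_simp at k2
        linear_combination k2
      have hval : (1 / (ξ₁ * (ξ₁ + ξ₂))) *
          ((∑' n, bb n * (z * ξ₁) ^ n) * (∑' n, bb n * (z * (ξ₁ + ξ₂)) ^ n)) =
          z ^ 2 * (1 / ((1 - Complex.exp (z * ξ₁)) * (1 - Complex.exp (z * (ξ₁ + ξ₂))))) := by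
        rw [hP1, hP2]
        have e1 : (1 - Complex.exp (z * ξ₁)) ≠ 0 := by
          intro h; apply hA1; linear_combination -h
        have e2 : (1 - Complex.exp (z * (ξ₁ + ξ₂))) ≠ 0 := by
          intro h; apply hA2; linear_combination -h
        field_simp
        ring
      rw [← hval]
      convert hmul using 1
      · rfl
      funext m
      show (1 / (ξ₁ * (ξ₁ + ξ₂)) * ∑ k ∈ Finset.range (m + 1),
          bb k * ξ₁ ^ k * (bb (m - k) * (ξ₁ + ξ₂) ^ (m - k))) * z ^ m = _
      rw [mul_assoc, Finset.sum_mul]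
      congr 1
      apply Finset.sum_congr rfl
      intro k hk
      have hk' := Finset.mem_range.mp hk
      have hpow : z ^ k * z ^ (m - k) = z ^ m := by rw [← pow_add]; congr 1; omega
      calc bb k * ξ₁ ^ k * (bb (m - k) * (ξ₁ + ξ₂) ^ (m - k)) * z ^ m
          = bb k * ξ₁ ^ k * (bb (m - k) * (ξ₁ + ξ₂) ^ (m - k)) * (z ^ k * z ^ (m - k)) := by
            rw [hpow]
        _ = bb k * (z * ξ₁) ^ k * (bb (m - k) * (z * (ξ₁ + ξ₂)) ^ (m - k)) := by
            rw [mul_pow, mul_pow]; ring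
  · field_simp
    ring
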